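/- The complex-valued function k(x) = e^(2ix)·( 1 + (1/2)·sech²(x/√2) + i·√2·tanh(x/√2) ) satisfies k''(x) + 4·k(x) + 3·sech²(x/√2)·k(x) = 0 for all real x, and k(-x) = conj(k(x)) for all real x. -/

import Mathlib

noncomputable def sech (x : ℝ) : ℝ := 1 / Real.cosh x

noncomputable def kJost (x : ℝ) : ℂ :=
  Complex.exp (2 * Complex.I * (x : ℂ)) *
    (1 + ((1 / 2 * sech (x / Real.sqrt 2) ^ 2 : ℝ) : ℂ)
      + Complex.I * (Real.sqrt 2 : ℂ) * ((Real.tanh (x / Real.sqrt 2) : ℝ) : ℂ))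

noncomputable def H (x : ℝ) : ℝ := sech (x / Real.sqrt 2)
noncomputable def T (x : ℝ) : ℝ := Real.tanh (x / Real.sqrt 2)

lemma sqrt2_sq : Real.sqrt 2 * Real.sqrt 2 = 2 := Real.mul_self_sqrt (by norm_num)
lemma sqrt2_ne : Real.sqrt 2 ≠ 0 := by positivity

lemma hasDerivAt_sech (y : ℝ) : HasDerivAt sech (-(sech y * Real.tanh y)) y := by
  have h := (hasDerivAt_const y (1:ℝ)).div (Real.hasDerivAt_cosh y) (Real.cosh_pos y).ne'
  have he : ((fun _ => (1:ℝ)) / Real.cosh) = sech := rfl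
  rw [he] at h
  refine HasDerivAt.congr_deriv h (Eq.symm ?_)
  rw [sech, Real.tanh_eq_sinh_div_cosh]
  have hc := (Real.cosh_pos y).ne'
  field_simp
  ring

lemma hasDerivAt_tanh' (y : ℝ) : HasDerivAt Real.tanh (sech y ^ 2) y := by
  have h := (Real.hasDerivAt_sinh y).div (Real.hasDerivAt_cosh y) (Real.cosh_pos y).ne'
  have he : (Real.sinh / Real.cosh) = Real.tanh := by
    funext z; exact (Real.tanh_eq_sinh_div_cosh z).symm
  rw [he] at h
  refine HasDerivAt.congr_deriv h (Eq.symm ?_)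
  have h2 := Real.cosh_sq_sub_sinh_sq y
  rw [sech, div_pow, one_pow]
  field_simp
  linarith

lemma hasDerivAt_inner (x : ℝ) : HasDerivAt (fun x : ℝ => x / Real.sqrt 2) (1 / Real.sqrt 2) x := by
  simpa using (hasDerivAt_id x).div_const (Real.sqrt 2)

lemma hH (x : ℝ) : HasDerivAt H (-(H x * T x) * Real.sqrt 2 / 2) x := by
  have h := (hasDerivAt_sech (x / Real.sqrt 2)).comp x (hasDerivAt_inner x)
  have : -(H x * T x) * Real.sqrt 2 / 2 = -(sech (x / Real.sqrt 2) * Real.tanh (x / Real.sqrt 2)) * (1 / Real.sqrt 2) := by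
    rw [H, T]; field_simp
    linear_combination (-sech (x / Real.sqrt 2) * Real.tanh (x / Real.sqrt 2)) * sqrt2_sq
  rw [this]; exact h

lemma hT (x : ℝ) : HasDerivAt T (H x ^ 2 * Real.sqrt 2 / 2) x := by
  have h := (hasDerivAt_tanh' (x / Real.sqrt 2)).comp x (hasDerivAt_inner x)
  have : H x ^ 2 * Real.sqrt 2 / 2 = sech (x / Real.sqrt 2) ^ 2 * (1 / Real.sqrt 2) := by
    rw [H]; field_simp
    linear_combination (sech (x / Real.sqrt 2) ^ 2) * sqrt2_sq
  rw [this]; exact h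

noncomputable def Gc (x : ℝ) : ℂ :=
  1 + ((1 / 2 * H x ^ 2 : ℝ) : ℂ) + Complex.I * (Real.sqrt 2 : ℂ) * ((T x : ℝ) : ℂ)

noncomputable def G1c (x : ℝ) : ℂ :=
  ((-(H x ^ 2 * T x) * Real.sqrt 2 / 2 : ℝ) : ℂ)
    + Complex.I * (Real.sqrt 2 : ℂ) * ((H x ^ 2 * Real.sqrt 2 / 2 : ℝ) : ℂ)

noncomputable def G2c (x : ℝ) : ℂ :=
  ((-(2 * H x * (-(H x * T x) * Real.sqrt 2 / 2) * T x + H x ^ 2 * (H x ^ 2 * Real.sqrt 2 / 2)) * Real.sqrt 2 / 2 : ℝ) : ℂ)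
    + Complex.I * (Real.sqrt 2 : ℂ) * ((2 * H x * (-(H x * T x) * Real.sqrt 2 / 2) * Real.sqrt 2 / 2 : ℝ) : ℂ)

noncomputable def K1 (x : ℝ) : ℂ :=
  Complex.exp (2 * Complex.I * (x : ℂ)) * (2 * Complex.I * Gc x + G1c x)

lemma hE (x : ℝ) :
    HasDerivAt (fun y : ℝ => Complex.exp (2 * Complex.I * (y : ℂ)))
      (2 * Complex.I * Complex.exp (2 * Complex.I * (x : ℂ))) x := by
  have h := ((Complex.hasDerivAt_exp (2 * Complex.I * (x : ℂ))).comp (x : ℂ)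
      ((hasDerivAt_id (x : ℂ)).const_mul (2 * Complex.I)))
  have h2 := h.comp_ofReal
  convert h2 using 1
  · rfl
  ring

lemma hGc (x : ℝ) : HasDerivAt Gc (G1c x) x := by
  have h1 := (((hH x).pow 2).const_mul (1/2 : ℝ)).ofReal_comp
  have h2 := ((hT x).ofReal_comp).const_mul (Complex.I * (Real.sqrt 2 : ℂ))
  have h := ((hasDerivAt_const x (1 : ℂ)).add h1).add h2
  refine HasDerivAt.congr_deriv h (Eq.symm ?_)
  rw [G1c]; push_cast; ring

lemma hG1c (x : ℝ) : HasDerivAt G1c (G2c x) x := by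
  have hA := ((((hH x).pow 2).mul (hT x)).neg.mul_const (Real.sqrt 2)).div_const 2
  have hB := (((hH x).pow 2).mul_const (Real.sqrt 2)).div_const 2
  have h := (hA.ofReal_comp).add ((hB.ofReal_comp).const_mul (Complex.I * (Real.sqrt 2 : ℂ)))
  have hfun : G1c = (fun y : ℝ =>
      ((-(H y ^ 2 * T y) * Real.sqrt 2 / 2 : ℝ) : ℂ)
        + Complex.I * (Real.sqrt 2 : ℂ) * ((H y ^ 2 * Real.sqrt 2 / 2 : ℝ) : ℂ)) := rfl
  rw [hfun]
  refine HasDerivAt.congr_deriv h (Eq.symm ?_)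
  rw [G2c, Pi.pow_apply]; push_cast; ring

lemma hK (x : ℝ) : HasDerivAt kJost (K1 x) x := by
  have h := (hE x).mul (hGc x)
  have hfun : ((fun y : ℝ => Complex.exp (2 * Complex.I * (y : ℂ))) * Gc) = kJost := by
    funext y; rw [Pi.mul_apply, kJost, Gc, H, T]
  rw [hfun] at h
  refine HasDerivAt.congr_deriv h (Eq.symm ?_)
  rw [K1]; ring

theorem kJost_solves_homogeneous_equation :
    (∀ x : ℝ, deriv (deriv kJost) x + 4 * kJost x
        + 3 * ((sech (x / Real.sqrt 2) ^ 2 : ℝ) : ℂ) * kJost x = 0) ∧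
    (∀ x : ℝ, kJost (-x) = (starRingEnd ℂ) (kJost x)) := by
  constructor
  · intro x
    have e1 : deriv kJost = K1 := funext fun y => (hK y).deriv
    have hb := (hE x).mul (((hGc x).const_mul (2 * Complex.I)).add (hG1c x))
    have hfun2 : ((fun y : ℝ => Complex.exp (2 * Complex.I * (y : ℂ))) * ((fun y => 2 * Complex.I * Gc y) + G1c)) = K1 := rfl
    rw [hfun2] at hb
    rw [e1, hb.deriv]
    have hs2 : ((Real.sqrt 2 : ℝ) : ℂ) ^ 2 = 2 := by
      rw [← Complex.ofReal_pow, sq, sqrt2_sq]; norm_num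
    have hTT : ((T x : ℝ) : ℂ) ^ 2 = 1 - ((H x : ℝ) : ℂ) ^ 2 := by
      rw [← Complex.ofReal_pow, ← Complex.ofReal_pow, ← Complex.ofReal_one, ← Complex.ofReal_sub]
      norm_cast
      have hc := (Real.cosh_pos (x / Real.sqrt 2)).ne'
      rw [T, H, Real.tanh_eq_sinh_div_cosh, sech]
      have h2 := Real.cosh_sq_sub_sinh_sq (x / Real.sqrt 2)
      field_simp
      nlinarith [h2]
    have hk' : kJost x = Complex.exp (2 * Complex.I * (x : ℂ)) * Gc x := by
      rw [kJost, Gc, H, T]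
    have hsq : sech (x / Real.sqrt 2) = H x := rfl
    rw [hk', hsq]
    simp only [Pi.add_apply, Gc, G1c, G2c]
    push_cast
    set s : ℂ := ((Real.sqrt 2 : ℝ) : ℂ)
    set Hc : ℂ := ((H x : ℝ) : ℂ)
    set Tc : ℂ := ((T x : ℝ) : ℂ)
    set E : ℂ := Complex.exp (2 * Complex.I * (x : ℂ))
    linear_combination
      ((-(1/4) * Hc^4 + 2 * Complex.I^2 * Hc^2 + (1/2) * Tc^2 * Hc^2
        - (1/2) * s * Tc * Complex.I * Hc^2) * E) * hs2
      + (E * Hc^2) * hTT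
      + ((4 + 6 * Hc^2 + 4 * s * Tc * Complex.I) * E) * Complex.I_sq
  · intro x
    simp only [kJost]
    rw [map_mul, ← Complex.exp_conj]
    have h1 : (starRingEnd ℂ) (2 * Complex.I * (x : ℂ)) = 2 * Complex.I * ((-x : ℝ) : ℂ) := by
      simp only [map_mul, Complex.conj_I, Complex.conj_ofReal, map_ofNat]
      push_cast
      ring
    rw [h1]
    congr 1
    have hs : sech (-x / Real.sqrt 2) = sech (x / Real.sqrt 2) := by
      rw [sech, sech, neg_div, Real.cosh_neg]
    have ht : Real.tanh (-x / Real.sqrt 2) = -Real.tanh (x / Real.sqrt 2) := by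
      rw [neg_div, Real.tanh_neg]
    rw [hs, ht]
    simp only [map_add, map_mul, map_one, Complex.conj_I, Complex.conj_ofReal]
    push_cast
    ring
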